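/- Consider the two-period simultaneous-move aggregator–storage game: the aggregator chooses prices (τ^[1], τ^[2]) ∈ [τmin, τmax]², the storage chooses (d^[1], d^[2]) ∈ ℝ² with d^[1] + d^[2] = 0, the aggregator's payoff is Σ_{t=1}^2 (τ^[t] − β^[t] − γ d^[t]) d^[t], and the storage's payoff is Σ_{t=1}^2 ( −τ^[t] d^[t] − (ε/2)(d^[t])² ), where γ > 0, ε > 0, β^[1], β^[2] ∈ ℝ, and τmin ≤ τmax. Then every Nash equilibrium (τ, d) of this game satisfies d^[1] = d^[2] = 0, and consequently both players earn zero profit in every Nash equilibrium (Lemma 4). -/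

import Mathlib

/-- Lemma 4: in the two-period simultaneous-move
aggregator–storage game, every Nash equilibrium `(τ, d)` — where `τ` maximizes
the aggregator's payoff `∑ₜ (τₜ − βₜ − γ dₜ) dₜ` over `[τmin, τmax]²` given `d`,
and `d` maximizes the storage's payoff `∑ₜ (−τₜ dₜ − (ε/2) dₜ²)` over
`{d : d₁ + d₂ = 0}` given `τ` — satisfies `d = 0`, and both players earn
zero profit. -/
theorem aggregator_storage_ne_zero_profit
    (γ ε τmin τmax : ℝ) (hγ : 0 < γ) (hε : 0 < ε) (hττ : τmin ≤ τmax)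
    (β : Fin 2 → ℝ) (τ d : Fin 2 → ℝ)
    (hd : d 0 + d 1 = 0)
    (hτbox : ∀ t, τ t ∈ Set.Icc τmin τmax)
    (hagg : ∀ τ' : Fin 2 → ℝ, (∀ t, τ' t ∈ Set.Icc τmin τmax) →
      (∑ t, (τ' t - β t - γ * d t) * d t) ≤ ∑ t, (τ t - β t - γ * d t) * d t)
    (hsto : ∀ d' : Fin 2 → ℝ, d' 0 + d' 1 = 0 →
      (∑ t, (-(τ t) * d' t - ε / 2 * (d' t) ^ 2)) ≤
        ∑ t, (-(τ t) * d t - ε / 2 * (d t) ^ 2)) :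
    (d 0 = 0 ∧ d 1 = 0) ∧
    (∑ t, (τ t - β t - γ * d t) * d t) = 0 ∧
    (∑ t, (-(τ t) * d t - ε / 2 * (d t) ^ 2)) = 0 := by
  have hd1 : d 1 = -(d 0) := by linarith
  -- storage best response: d 0 = (τ 1 - τ 0) / (2ε)
  set x : ℝ := (τ 1 - τ 0) / (2 * ε) with hx
  have hbr : d 0 = x := by
    have h := hsto (fun t => if t = 0 then x else -x) (by simp)
    simp [Fin.sum_univ_two, hd1] at h
    have hx2 : τ 0 - τ 1 = -(2 * ε) * x := by
      rw [hx]; field_simp; ring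
    have hx3 : (τ 0 - τ 1) * (x - d 0) = -(2 * ε) * x * (x - d 0) := by
      rw [hx2]
    have key : ε * (x - d 0) ^ 2 ≤ 0 := by nlinarith [hx3, h]
    have h4 : (x - d 0) ^ 2 = 0 := by
      have := sq_nonneg (x - d 0)
      nlinarith [key]
    have := pow_eq_zero_iff two_ne_zero |>.mp h4
    linarith
  have hmem := hτbox 0
  have hmem' := hτbox 1
  -- aggregator optimality against two deviations
  have h1 := hagg (fun t => if t = 0 then τmax else τmin)
    (by intro t; fin_cases t <;> simp [Set.mem_Icc, hττ])
  have h2 := hagg (fun t => if t = 0 then τmin else τmax)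
    (by intro t; fin_cases t <;> simp [Set.mem_Icc, hττ])
  simp [Fin.sum_univ_two, hd1] at h1 h2
  have hd0 : d 0 = 0 := by
    have hx2 : τ 1 - τ 0 = 2 * ε * d 0 := by
      rw [hbr, hx]; field_simp
    have hx3 : (τ 1 - τ 0) * d 0 = 2 * ε * d 0 * d 0 := by rw [hx2]
    have key : ε * d 0 ^ 2 ≤ 0 := by nlinarith [hx3, h1, h2]
    have h4 : d 0 ^ 2 = 0 := by
      have := sq_nonneg (d 0)
      nlinarith [key]
    exact pow_eq_zero_iff two_ne_zero |>.mp h4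
  have hd1' : d 1 = 0 := by rw [hd1, hd0, neg_zero]
  refine ⟨⟨hd0, hd1'⟩, ?_, ?_⟩ <;> simp [Fin.sum_univ_two, hd0, hd1']
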